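/- arXiv:1008.1516 — 3 statements merged into one kernel-verified Lean document; each statement's English description precedes it below -/
import Mathlib

section
/- In a network supported by a stable configuration with γ ≤ 1/2, no vertex is incident to any local bridge; and for any γ < 1, each vertex is incident to at most one local bridge. Formally: if u is connected to two distinct agents v, x such that u shares no common neighbor with v and no common neighbor with x, the configuration is not stable. -/
open Finset
set_option linter.unusedSectionVars false

/-- An event configuration: each agent holds a finite list of events,
each event being a set of attendees together with a rate. -/
abbrev Config (V : Type*) := V → List (Finset V × ℝ)

section Game

variable {V : Type*} [Fintype V] [DecidableEq V]

/-- A valid strategy for `v`: every event contains `v` and has positive rate. -/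
def ValidStrategy (v : V) (s : List (Finset V × ℝ)) : Prop :=
  ∀ e ∈ s, v ∈ e.1 ∧ 0 < e.2

def ConfigValid (cfg : Config V) : Prop := ∀ v, ValidStrategy v (cfg v)

/-- The meeting rate between `u` and `v` supported by `w` (rate of events held by `w`
attended by both `u` and `v`). -/
def rateBy (cfg : Config V) (w u v : V) : ℝ :=
  ((cfg w).map (fun e => if u ∈ e.1 ∧ v ∈ e.1 then e.2 else 0)).sum

/-- The total meeting rate between `u` and `v`. -/
def meet (cfg : Config V) (u v : V) : ℝ := ∑ w, rateBy cfg w u v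

/-- `u` and `v` are connected when their meeting rate is at least the threshold `1`. -/
def connected (cfg : Config V) (u v : V) : Prop := u ≠ v ∧ 1 ≤ meet cfg u v

open scoped Classical in
/-- The set of agents connected to `v`. -/
noncomputable def nbrs (cfg : Config V) (v : V) : Finset V :=
  univ.filter (fun u => connected cfg u v)

/-- The cost of strategy `s` for agent `v` with parameters `b, c`. -/
def stratCost (b c : ℝ) (v : V) (s : List (Finset V × ℝ)) : ℝ :=
  (s.map (fun e => e.2 * (c * ((e.1.erase v).card : ℝ) + b))).sum

/-- Utility of agent `v`: benefit `a` per connection minus cost of own events. -/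
noncomputable def utility (a b c : ℝ) (cfg : Config V) (v : V) : ℝ :=
  a * ((nbrs cfg v).card : ℝ) - stratCost b c v (cfg v)

/-- A configuration is stable when it is valid and is a Nash equilibrium:
no agent can strictly improve her utility by a unilateral change of strategy. -/
def Stable (a b c : ℝ) (cfg : Config V) : Prop :=
  ConfigValid cfg ∧ ∀ v (s : List (Finset V × ℝ)), ValidStrategy v s →
    utility a b c (Function.update cfg v s) v ≤ utility a b c cfg v

/-- A configuration supports the graph `G` when adjacency coincides with connection. -/
def Supports (cfg : Config V) (G : SimpleGraph V) : Prop :=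
  ∀ u v, G.Adj u v ↔ connected cfg u v

end Game

section Aux

variable {V : Type*} [Fintype V] [DecidableEq V]

/-- rate of events in strategy `s` attended by both `u` and `v`. -/
def srate (s : List (Finset V × ℝ)) (u v : V) : ℝ :=
  (s.map (fun e => if u ∈ e.1 ∧ v ∈ e.1 then e.2 else 0)).sum

/-- total rate of a strategy. -/
def totRate {V : Type*} (s : List (Finset V × ℝ)) : ℝ := (s.map (fun e => e.2)).sum

@[simp] lemma srate_nil (u v : V) : srate ([] : List (Finset V × ℝ)) u v = 0 := rfl

@[simp] lemma srate_cons (e : Finset V × ℝ) (s : List (Finset V × ℝ)) (u v : V) :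
    srate (e :: s) u v = (if u ∈ e.1 ∧ v ∈ e.1 then e.2 else 0) + srate s u v := by
  simp [srate]

@[simp] lemma srate_append (s t : List (Finset V × ℝ)) (u v : V) :
    srate (s ++ t) u v = srate s u v + srate t u v := by
  simp [srate]

@[simp] lemma totRate_nil : totRate ([] : List (Finset V × ℝ)) = 0 := rfl

@[simp] lemma totRate_cons (e : Finset V × ℝ) (s : List (Finset V × ℝ)) :
    totRate (e :: s) = e.2 + totRate s := by simp [totRate]

@[simp] lemma totRate_append (s t : List (Finset V × ℝ)) :
    totRate (s ++ t) = totRate s + totRate t := by simp [totRate]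

@[simp] lemma stratCost_nil (b c : ℝ) (p : V) : stratCost b c p [] = 0 := rfl

@[simp] lemma stratCost_cons (b c : ℝ) (p : V) (e : Finset V × ℝ) (s : List (Finset V × ℝ)) :
    stratCost b c p (e :: s)
      = e.2 * (c * ((e.1.erase p).card : ℝ) + b) + stratCost b c p s := by
  simp [stratCost]

lemma rateBy_eq_srate (cfg : Config V) (w u v : V) : rateBy cfg w u v = srate (cfg w) u v := rfl

lemma srate_comm (s : List (Finset V × ℝ)) (u v : V) : srate s u v = srate s v u := by
  induction s with
  | nil => rfl
  | cons e s ih =>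
    rw [srate_cons, srate_cons, ih]
    congr 1
    by_cases h1 : u ∈ e.1 <;> by_cases h2 : v ∈ e.1 <;> simp [h1, h2]

lemma srate_nonneg (s : List (Finset V × ℝ)) (h : ∀ e ∈ s, 0 < e.2) (u v : V) :
    0 ≤ srate s u v := by
  induction s with
  | nil => simp
  | cons e s ih =>
    rw [srate_cons]
    have h1 : 0 ≤ if u ∈ e.1 ∧ v ∈ e.1 then e.2 else 0 := by
      split_ifs
      · exact (h e (List.mem_cons_self)).le
      · exact le_rfl
    have h2 := ih (fun f hf => h f (List.mem_cons_of_mem e hf))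
    linarith

lemma srate_le_totRate (s : List (Finset V × ℝ)) (h : ∀ e ∈ s, 0 < e.2) (u v : V) :
    srate s u v ≤ totRate s := by
  induction s with
  | nil => simp
  | cons e s ih =>
    rw [srate_cons, totRate_cons]
    have h1 : (if u ∈ e.1 ∧ v ∈ e.1 then e.2 else 0) ≤ e.2 := by
      split_ifs
      · exact le_rfl
      · exact (h e (List.mem_cons_self)).le
    have h2 := ih (fun f hf => h f (List.mem_cons_of_mem e hf))
    linarith

lemma srate_eq_zero (s : List (Finset V × ℝ)) (v : V) (h : ∀ e ∈ s, v ∉ e.1) (u : V) :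
    srate s u v = 0 := by
  induction s with
  | nil => simp
  | cons e s ih =>
    rw [srate_cons, ih (fun f hf => h f (List.mem_cons_of_mem e hf))]
    rw [if_neg (fun hc => h e (List.mem_cons_self) hc.2)]
    ring

lemma srate_pos (s : List (Finset V × ℝ)) (h : ∀ e ∈ s, 0 < e.2) {e : Finset V × ℝ}
    (he : e ∈ s) {u v : V} (hu : u ∈ e.1) (hv : v ∈ e.1) : 0 < srate s u v := by
  induction s with
  | nil => exact absurd he List.not_mem_nil
  | cons f s ih =>
    rw [srate_cons]
    rcases List.mem_cons.mp he with rfl | he'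
    · rw [if_pos ⟨hu, hv⟩]
      have h1 := srate_nonneg s (fun g hg => h g (List.mem_cons_of_mem _ hg)) u v
      have h2 := h _ (List.mem_cons_self)
      linarith
    · have h1 : 0 ≤ if u ∈ f.1 ∧ v ∈ f.1 then f.2 else 0 := by
        split_ifs
        · exact (h f (List.mem_cons_self)).le
        · exact le_rfl
      have h2 := ih (fun g hg => h g (List.mem_cons_of_mem f hg)) he'
      linarith

lemma exists_event_of_srate_ne (s : List (Finset V × ℝ)) (u v : V) (h : srate s u v ≠ 0) :
    ∃ e ∈ s, u ∈ e.1 ∧ v ∈ e.1 := by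
  induction s with
  | nil => simp at h
  | cons f s ih =>
    by_cases hc : u ∈ f.1 ∧ v ∈ f.1
    · exact ⟨f, List.mem_cons_self, hc⟩
    · rw [srate_cons, if_neg hc, zero_add] at h
      obtain ⟨e, he, h'⟩ := ih h
      exact ⟨e, List.mem_cons_of_mem f he, h'⟩

lemma srate_inclexcl (s : List (Finset V × ℝ)) (p : V) (hmem : ∀ e ∈ s, p ∈ e.1)
    (hpos : ∀ e ∈ s, 0 < e.2) (u v : V) :
    srate s p u + srate s p v - totRate s ≤ srate s u v := by
  induction s with
  | nil => simp
  | cons f s ih =>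
    have hp := hmem f (List.mem_cons_self)
    have hf2 := hpos f (List.mem_cons_self)
    have ih' := ih (fun g hg => hmem g (List.mem_cons_of_mem f hg))
      (fun g hg => hpos g (List.mem_cons_of_mem f hg))
    rw [srate_cons, srate_cons, srate_cons, totRate_cons]
    have head : (if p ∈ f.1 ∧ u ∈ f.1 then f.2 else 0) + (if p ∈ f.1 ∧ v ∈ f.1 then f.2 else 0)
        - f.2 ≤ (if u ∈ f.1 ∧ v ∈ f.1 then f.2 else 0) := by
      by_cases h1 : u ∈ f.1 <;> by_cases h2 : v ∈ f.1 <;> simp [h1, h2, hp] <;> linarith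
    linarith

lemma stratCost_eq (b c : ℝ) (p : V) (s : List (Finset V × ℝ)) (hmem : ∀ e ∈ s, p ∈ e.1) :
    stratCost b c p s = c * (∑ y ∈ univ.erase p, srate s p y) + b * totRate s := by
  induction s with
  | nil => simp
  | cons f s ih =>
    have hp := hmem f (List.mem_cons_self)
    have ih' := ih (fun g hg => hmem g (List.mem_cons_of_mem f hg))
    rw [stratCost_cons, totRate_cons, ih']
    have key : (∑ y ∈ univ.erase p, (if p ∈ f.1 ∧ y ∈ f.1 then f.2 else 0))
        = f.2 * ((f.1.erase p).card : ℝ) := by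
      have h1 : ∀ y ∈ univ.erase p,
          (if p ∈ f.1 ∧ y ∈ f.1 then f.2 else 0) = if y ∈ f.1.erase p then f.2 else 0 := by
        intro y hy
        have hyp : y ≠ p := (Finset.mem_erase.mp hy).1
        by_cases h : y ∈ f.1 <;> simp [h, hp, hyp, Finset.mem_erase]
      rw [Finset.sum_congr rfl h1, Finset.sum_ite_mem]
      have h2 : (univ.erase p) ∩ (f.1.erase p) = f.1.erase p := by
        apply Finset.inter_eq_right.mpr
        intro y hy
        exact Finset.mem_erase.mpr ⟨(Finset.mem_erase.mp hy).1, Finset.mem_univ y⟩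
      rw [h2, Finset.sum_const, nsmul_eq_mul, mul_comm]
    have hsum : ∑ y ∈ univ.erase p, srate (f :: s) p y
        = f.2 * ((f.1.erase p).card : ℝ) + ∑ y ∈ univ.erase p, srate s p y := by
      rw [← key, ← Finset.sum_add_distrib]
      exact Finset.sum_congr rfl (fun y _ => srate_cons f s p y)
    rw [hsum]
    ring

lemma meet_eq (cfg : Config V) (u v : V) : meet cfg u v = ∑ w, srate (cfg w) u v := rfl

lemma meet_comm (cfg : Config V) (u v : V) : meet cfg u v = meet cfg v u :=
  Finset.sum_congr rfl (fun w _ => srate_comm (cfg w) u v)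

lemma srate_le_meet {cfg : Config V} (hv : ConfigValid cfg) (w u v : V) :
    srate (cfg w) u v ≤ meet cfg u v := by
  rw [meet_eq]
  exact Finset.single_le_sum
    (fun w' _ => srate_nonneg (cfg w') (fun e he => (hv w' e he).2) u v) (Finset.mem_univ w)

lemma meet_update (cfg : Config V) (p : V) (s : List (Finset V × ℝ)) (u v : V) :
    meet (Function.update cfg p s) u v = meet cfg u v - srate (cfg p) u v + srate s u v := by
  rw [meet_eq, meet_eq]
  have h : ∀ w, srate (Function.update cfg p s w) u v
      = srate (cfg w) u v + (if w = p then srate s u v - srate (cfg p) u v else 0) := by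
    intro w
    rcases eq_or_ne w p with rfl | hw
    · rw [Function.update_self, if_pos rfl]; ring
    · rw [Function.update_of_ne hw, if_neg hw]; ring
  rw [Finset.sum_congr rfl (fun w _ => h w), Finset.sum_add_distrib,
    Finset.sum_ite_eq' Finset.univ p, if_pos (Finset.mem_univ p)]
  ring

open scoped Classical in
lemma mem_nbrs {cfg : Config V} {u v : V} : u ∈ nbrs cfg v ↔ connected cfg u v := by
  unfold nbrs
  constructor
  · intro h
    exact (Finset.mem_filter.mp h).2
  · intro h
    exact Finset.mem_filter.mpr ⟨Finset.mem_univ u, h⟩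

lemma connected_comm {cfg : Config V} {u v : V} : connected cfg u v ↔ connected cfg v u := by
  unfold connected
  rw [meet_comm]
  exact and_congr_left' ⟨Ne.symm, Ne.symm⟩

/-- helper: equal summands give equal list sums. -/
lemma list_map_sum_congr {A : Type*} (l : List A) (f g : A → ℝ) (h : ∀ x ∈ l, f x = g x) :
    (l.map f).sum = (l.map g).sum := by
  induction l with
  | nil => rfl
  | cons x l ih =>
    rw [List.map_cons, List.map_cons, List.sum_cons, List.sum_cons,
      h x (List.mem_cons_self), ih (fun y hy => h y (List.mem_cons_of_mem x hy))]

/-- In a stable configuration every attendee of an event is connected to its host. -/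
lemma attendee_connected {a b c : ℝ} (hc : 0 < c) {cfg : Config V} (hst : Stable a b c cfg)
    {w : V} {e : Finset V × ℝ} (he : e ∈ cfg w) {q : V} (hq : q ∈ e.1) (hqw : q ≠ w) :
    connected cfg q w := by
  by_contra hncon
  have hv := hst.1
  set s' : List (Finset V × ℝ) := (cfg w).map (fun f => (f.1.erase q, f.2)) with hs'
  have hval' : ValidStrategy w s' := by
    intro f' hf'
    rw [hs', List.mem_map] at hf'
    obtain ⟨f, hf, rfl⟩ := hf'
    exact ⟨Finset.mem_erase.mpr ⟨Ne.symm hqw, (hv w f hf).1⟩, (hv w f hf).2⟩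
  have hsr : ∀ y z : V, y ≠ q → z ≠ q → srate s' y z = srate (cfg w) y z := by
    intro y z hy hz
    rw [hs']
    unfold srate
    rw [List.map_map]
    apply list_map_sum_congr
    intro f hf
    by_cases h1 : y ∈ f.1 <;> by_cases h2 : z ∈ f.1 <;>
      simp [Finset.mem_erase, hy, hz, h1, h2, Function.comp]
  have hsrq : ∀ y : V, srate s' y q = 0 := by
    intro y
    apply srate_eq_zero
    intro f' hf'
    rw [hs', List.mem_map] at hf'
    obtain ⟨f, hf, rfl⟩ := hf'
    exact Finset.notMem_erase q f.1
  have hnb : nbrs (Function.update cfg w s') w = nbrs cfg w := by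
    ext y
    rw [mem_nbrs, mem_nbrs]
    rcases eq_or_ne y q with rfl | hy
    · have hmq : ¬ (1 ≤ meet cfg y w) := fun h => hncon ⟨hqw, h⟩
      have hle : meet (Function.update cfg w s') y w ≤ meet cfg y w := by
        rw [meet_update, srate_comm s' y w, hsrq w]
        have h0 := srate_nonneg (cfg w) (fun f hf => (hv w f hf).2) y w
        linarith
      constructor
      · rintro ⟨h1, h2⟩
        exact (hmq (h2.trans hle)).elim
      · rintro ⟨h1, h2⟩
        exact (hmq h2).elim
    · unfold connected
      rw [meet_update, hsr y w hy (Ne.symm hqw)]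
      constructor
      · rintro ⟨h1, h2⟩; exact ⟨h1, by linarith⟩
      · rintro ⟨h1, h2⟩; exact ⟨h1, by linarith⟩
  have htot : totRate s' = totRate (cfg w) := by
    rw [hs']
    unfold totRate
    rw [List.map_map]
    rfl
  have hqmem : q ∈ univ.erase w := Finset.mem_erase.mpr ⟨hqw, Finset.mem_univ q⟩
  have hcost : stratCost b c w s' = stratCost b c w (cfg w) - c * srate (cfg w) w q := by
    rw [stratCost_eq b c w s' (fun f' hf' => (hval' f' hf').1),
      stratCost_eq b c w (cfg w) (fun f hf => (hv w f hf).1), htot]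
    rw [← Finset.sum_erase_add _ _ hqmem, ← Finset.sum_erase_add (univ.erase w)
      (fun y => srate (cfg w) w y) hqmem]
    rw [Finset.sum_congr rfl (fun y hy => hsr w y (Ne.symm hqw) (Finset.mem_erase.mp hy).1)]
    simp only [hsrq w]
    ring
  have hpos : 0 < srate (cfg w) w q :=
    srate_pos (cfg w) (fun f hf => (hv w f hf).2) he (hv w e he).1 hq
  have hstab := hst.2 w s' hval'
  have hupd : utility a b c (Function.update cfg w s') w
      = a * ((nbrs (Function.update cfg w s') w).card : ℝ) - stratCost b c w s' := by
    rw [utility, Function.update_self]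
  rw [hupd, hnb, utility, hcost] at hstab
  nlinarith [mul_pos hc hpos]

/-- In a stable configuration, a supported meeting rate never exceeds the threshold. -/
lemma meet_le_one {a b c : ℝ} (hc : 0 < c) {cfg : Config V} (hst : Stable a b c cfg)
    {p q : V} (hqp : q ≠ p) (hr : 0 < srate (cfg p) p q) : meet cfg p q ≤ 1 := by
  by_contra hcon
  push_neg at hcon
  have hv := hst.1
  obtain ⟨e, he, hpe, hqe⟩ := exists_event_of_srate_ne (cfg p) p q (ne_of_gt hr)
  obtain ⟨l1, l2, hl⟩ := List.append_of_mem he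
  have he2 : 0 < e.2 := (hv p e he).2
  have hmin0 : 0 < min e.2 (meet cfg p q - 1) := lt_min he2 (by linarith)
  have hmin1 := min_le_left e.2 (meet cfg p q - 1)
  have hmin2 := min_le_right e.2 (meet cfg p q - 1)
  set ε := min e.2 (meet cfg p q - 1) / 2 with hεdef
  have hε0 : 0 < ε := by rw [hεdef]; linarith
  have hεe : ε < e.2 := by rw [hεdef]; linarith
  have hεm : ε < meet cfg p q - 1 := by rw [hεdef]; linarith
  set s' : List (Finset V × ℝ) := (e.1.erase q, ε) :: (l1 ++ (e.1, e.2 - ε) :: l2) with hs'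
  have hval' : ValidStrategy p s' := by
    intro f hf
    rw [hs'] at hf
    rcases List.mem_cons.mp hf with rfl | hf'
    · exact ⟨Finset.mem_erase.mpr ⟨Ne.symm hqp, hpe⟩, hε0⟩
    · rcases List.mem_append.mp hf' with hf1 | hf2
      · exact hv p f (by rw [hl]; exact List.mem_append_left _ hf1)
      · rcases List.mem_cons.mp hf2 with rfl | hf3
        · exact ⟨hpe, by show (0:ℝ) < e.2 - ε; linarith⟩
        · exact hv p f (by rw [hl]; exact List.mem_append_right _ (List.mem_cons_of_mem _ hf3))
  have hsrall : ∀ y z : V, y ≠ q → z ≠ q → srate s' y z = srate (cfg p) y z := by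
    intro y z hy hz
    rw [hs', hl]
    simp only [srate_cons, srate_append]
    by_cases hy1 : y ∈ e.1 <;> by_cases hz1 : z ∈ e.1 <;>
      simp [Finset.mem_erase, hy, hz, hy1, hz1] <;> ring
  have hsrpq : srate s' p q = srate (cfg p) p q - ε := by
    rw [hs', hl]
    simp only [srate_cons, srate_append]
    rw [if_neg (fun h => (Finset.notMem_erase q e.1) h.2), if_pos ⟨hpe, hqe⟩,
      if_pos ⟨hpe, hqe⟩]
    ring
  have hmy : ∀ y : V, y ≠ q → meet (Function.update cfg p s') y p = meet cfg y p := by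
    intro y hy
    rw [meet_update, hsrall y p hy (Ne.symm hqp)]
    ring
  have hmq : meet (Function.update cfg p s') q p = meet cfg q p - ε := by
    rw [meet_update, srate_comm s' q p, hsrpq, srate_comm (cfg p) q p]
    ring
  have hnb : nbrs (Function.update cfg p s') p = nbrs cfg p := by
    ext y
    rw [mem_nbrs, mem_nbrs]
    rcases eq_or_ne y q with rfl | hy
    · have h1 : connected cfg y p := ⟨hqp, by rw [meet_comm]; linarith⟩
      have h2 : connected (Function.update cfg p s') y p := by
        refine ⟨hqp, ?_⟩
        rw [hmq, meet_comm cfg y p]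
        linarith
      exact iff_of_true h2 h1
    · unfold connected
      rw [hmy y hy]
  have htot : totRate s' = totRate (cfg p) := by
    rw [hs', hl]
    simp only [totRate_cons, totRate_append]
    ring
  have hqmem : q ∈ univ.erase p := Finset.mem_erase.mpr ⟨hqp, Finset.mem_univ q⟩
  have hsum : ∑ y ∈ univ.erase p, srate s' p y
      = (∑ y ∈ univ.erase p, srate (cfg p) p y) - ε := by
    rw [← Finset.sum_erase_add _ _ hqmem, ← Finset.sum_erase_add (univ.erase p)
      (fun y => srate (cfg p) p y) hqmem, hsrpq]
    rw [Finset.sum_congr rfl (fun y hy => hsrall p y (Ne.symm hqp) (Finset.mem_erase.mp hy).1)]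
    ring
  have hstab := hst.2 p s' hval'
  have hupd : utility a b c (Function.update cfg p s') p
      = a * ((nbrs (Function.update cfg p s') p).card : ℝ) - stratCost b c p s' := by
    rw [utility, Function.update_self]
  rw [hupd, hnb, utility, stratCost_eq b c p s' (fun f hf => (hval' f hf).1),
    stratCost_eq b c p (cfg p) (fun f hf => (hv p f hf).1), htot, hsum] at hstab
  nlinarith [mul_pos hc hε0]

/-- If `q` is not connected to `p` yet within reach, stability bounds `a` by the total rate. -/
lemma add_all {a b c : ℝ} (ha : 0 < a) (hc : 0 < c) {cfg : Config V} (hst : Stable a b c cfg)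
    {p q : V} (hqp : q ≠ p) (hnc : ¬ connected cfg q p)
    (hfeas : 1 ≤ meet cfg p q + totRate (cfg p)) : a ≤ c * totRate (cfg p) := by
  have hv := hst.1
  have hnoatt : ∀ f ∈ cfg p, q ∉ f.1 := by
    intro f hf hqf
    exact hnc (attendee_connected hc hst hf hqf hqp)
  set s' : List (Finset V × ℝ) := (cfg p).map (fun f => (insert q f.1, f.2)) with hs'
  have hval' : ValidStrategy p s' := by
    intro f' hf'
    rw [hs', List.mem_map] at hf'
    obtain ⟨f, hf, rfl⟩ := hf'
    exact ⟨Finset.mem_insert_of_mem (hv p f hf).1, (hv p f hf).2⟩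
  have hsr : ∀ y z : V, y ≠ q → z ≠ q → srate s' y z = srate (cfg p) y z := by
    intro y z hy hz
    rw [hs']
    unfold srate
    rw [List.map_map]
    apply list_map_sum_congr
    intro f hf
    by_cases h1 : y ∈ f.1 <;> by_cases h2 : z ∈ f.1 <;>
      simp [Finset.mem_insert, hy, hz, h1, h2, Function.comp]
  have hsrpq : srate s' p q = totRate (cfg p) := by
    rw [hs']
    unfold srate totRate
    rw [List.map_map]
    apply list_map_sum_congr
    intro f hf
    simp [Function.comp, Finset.mem_insert_of_mem (hv p f hf).1]
  have hsrq0 : srate (cfg p) p q = 0 := srate_eq_zero (cfg p) q hnoatt p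
  have hmq : meet (Function.update cfg p s') q p = meet cfg p q + totRate (cfg p) := by
    rw [meet_update, srate_comm s' q p, hsrpq, srate_comm (cfg p) q p, hsrq0,
      meet_comm cfg q p]
    ring
  have hconn'q : connected (Function.update cfg p s') q p := ⟨hqp, by rw [hmq]; linarith⟩
  have hq_notin : q ∉ nbrs cfg p := fun h => hnc (mem_nbrs.mp h)
  have hsub : insert q (nbrs cfg p) ⊆ nbrs (Function.update cfg p s') p := by
    intro y hy
    rcases Finset.mem_insert.mp hy with rfl | hy'
    · exact mem_nbrs.mpr hconn'q
    · have hyq : y ≠ q := by rintro rfl; exact hq_notin hy'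
      have hyc := mem_nbrs.mp hy'
      refine mem_nbrs.mpr ⟨hyc.1, ?_⟩
      rw [meet_update, hsr y p hyq (Ne.symm hqp)]
      linarith [hyc.2]
  have hcard : ((nbrs cfg p).card : ℝ) + 1 ≤ ((nbrs (Function.update cfg p s') p).card : ℝ) := by
    have h1 : (insert q (nbrs cfg p)).card = (nbrs cfg p).card + 1 :=
      Finset.card_insert_of_notMem hq_notin
    have h2 := Finset.card_le_card hsub
    rw [h1] at h2
    exact_mod_cast h2
  have htot : totRate s' = totRate (cfg p) := by
    rw [hs']
    unfold totRate
    rw [List.map_map]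
    rfl
  have hqmem : q ∈ univ.erase p := Finset.mem_erase.mpr ⟨hqp, Finset.mem_univ q⟩
  have hsum : ∑ y ∈ univ.erase p, srate s' p y
      = (∑ y ∈ univ.erase p, srate (cfg p) p y) + totRate (cfg p) := by
    rw [← Finset.sum_erase_add _ _ hqmem, ← Finset.sum_erase_add (univ.erase p)
      (fun y => srate (cfg p) p y) hqmem, hsrpq, hsrq0]
    rw [Finset.sum_congr rfl (fun y hy => hsr p y (Ne.symm hqp) (Finset.mem_erase.mp hy).1)]
    ring
  have hstab := hst.2 p s' hval'
  have hupd : utility a b c (Function.update cfg p s') p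
      = a * ((nbrs (Function.update cfg p s') p).card : ℝ) - stratCost b c p s' := by
    rw [utility, Function.update_self]
  rw [hupd, utility, stratCost_eq b c p s' (fun f hf => (hval' f hf).1),
    stratCost_eq b c p (cfg p) (fun f hf => (hv p f hf).1), htot, hsum] at hstab
  nlinarith [hcard, mul_le_mul_of_nonneg_left hcard ha.le]

/-- Nested event-list construction realizing prescribed attendance rates `g` on `K`
at cost at most `c * ∑ g + b * M`. -/
lemma nest_exists {b c : ℝ} (hb : 0 ≤ b) (hc : 0 ≤ c) (p : V) :
    ∀ (n : ℕ) (g : V → ℝ), (∀ y, 0 ≤ g y) → ∀ (K : Finset V),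
      (K.filter (fun y => 0 < g y)).card ≤ n → p ∉ K →
      ∀ (M : ℝ), 0 ≤ M → (∀ y ∈ K, g y ≤ M) →
      ∃ s : List (Finset V × ℝ), ValidStrategy p s ∧
        (∀ y, y ≠ p → srate s p y = if y ∈ K then g y else 0) ∧
        stratCost b c p s ≤ c * (∑ y ∈ K, g y) + b * M := by
  intro n
  induction n with
  | zero =>
    intro g hg K hcard hp M hM0 hMub
    have hzero : ∀ y ∈ K, g y = 0 := by
      intro y hy
      by_contra h
      have hmem : y ∈ K.filter (fun y => 0 < g y) :=
        Finset.mem_filter.mpr ⟨hy, lt_of_le_of_ne (hg y) (Ne.symm h)⟩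
      have := Finset.card_pos.mpr ⟨y, hmem⟩
      omega
    refine ⟨[], fun e he => absurd he List.not_mem_nil, ?_, ?_⟩
    · intro y hy
      rw [srate_nil]
      by_cases h : y ∈ K
      · rw [if_pos h, hzero y h]
      · rw [if_neg h]
    · rw [stratCost_nil, Finset.sum_eq_zero hzero]
      have := mul_nonneg hb hM0
      linarith
  | succ n ih =>
    intro g hg K hcard hp M hM0 hMub
    set Kpos := K.filter (fun y => 0 < g y) with hKposdef
    rcases Kpos.eq_empty_or_nonempty with hKe | hKne
    · have hzero : ∀ y ∈ K, g y = 0 := by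
        intro y hy
        by_contra h
        have hmem : y ∈ Kpos := Finset.mem_filter.mpr ⟨hy, lt_of_le_of_ne (hg y) (Ne.symm h)⟩
        rw [hKe] at hmem
        exact absurd hmem (Finset.notMem_empty y)
      refine ⟨[], fun e he => absurd he List.not_mem_nil, ?_, ?_⟩
      · intro y hy
        rw [srate_nil]
        by_cases h : y ∈ K
        · rw [if_pos h, hzero y h]
        · rw [if_neg h]
      · rw [stratCost_nil, Finset.sum_eq_zero hzero]
        have := mul_nonneg hb hM0
        linarith
    · obtain ⟨ym, hym, hmin⟩ := Finset.exists_min_image Kpos g hKne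
      have hymK : ym ∈ K := (Finset.mem_filter.mp hym).1
      have hμ0 : 0 < g ym := (Finset.mem_filter.mp hym).2
      have hμM : g ym ≤ M := hMub ym hymK
      set g' : V → ℝ := fun y => if y ∈ Kpos then g y - g ym else 0 with hg'def
      have hg' : ∀ y, 0 ≤ g' y := by
        intro y
        rw [hg'def]
        dsimp only
        split_ifs with h
        · exact sub_nonneg.mpr (hmin y h)
        · exact le_rfl
      have hfilt : Kpos.filter (fun y => 0 < g' y) ⊆ Kpos.erase ym := by
        intro y hy
        obtain ⟨hy1, hy2⟩ := Finset.mem_filter.mp hy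
        refine Finset.mem_erase.mpr ⟨?_, hy1⟩
        rintro rfl
        rw [hg'def] at hy2
        simp only [hy1, if_pos] at hy2
        linarith
      have hcard' : (Kpos.filter (fun y => 0 < g' y)).card ≤ n := by
        have h1 := Finset.card_le_card hfilt
        have h2 : (Kpos.erase ym).card = Kpos.card - 1 := Finset.card_erase_of_mem hym
        have h3 : Kpos.card ≤ n + 1 := hcard
        have h4 : 0 < Kpos.card := Finset.card_pos.mpr ⟨ym, hym⟩
        omega
      have hpKpos : p ∉ Kpos := fun h => hp (Finset.mem_filter.mp h).1
      obtain ⟨s', hval', hsr', hcost'⟩ := ih g' hg' Kpos hcard' hpKpos (M - g ym)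
        (by linarith)
        (fun y hy => by
          rw [hg'def]
          dsimp only
          rw [if_pos hy]
          have := hMub y (Finset.mem_filter.mp hy).1
          linarith)
      refine ⟨(insert p Kpos, g ym) :: s', ?_, ?_, ?_⟩
      · intro e he
        rcases List.mem_cons.mp he with rfl | he'
        · exact ⟨Finset.mem_insert_self p Kpos, hμ0⟩
        · exact hval' e he'
      · intro y hy
        rw [srate_cons, hsr' y hy]
        have hpin : p ∈ (insert p Kpos : Finset V) := Finset.mem_insert_self p Kpos
        have hyins : (y ∈ (insert p Kpos : Finset V)) ↔ y ∈ Kpos := by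
          rw [Finset.mem_insert]
          exact or_iff_right hy
        by_cases hyK : y ∈ Kpos
        · rw [if_pos ⟨hpin, hyins.mpr hyK⟩, if_pos hyK, if_pos (Finset.mem_filter.mp hyK).1]
          rw [hg'def]
          dsimp only
          rw [if_pos hyK]
          ring
        · rw [if_neg (fun h => hyK (hyins.mp h.2)), if_neg hyK]
          by_cases hyK2 : y ∈ K
          · rw [if_pos hyK2]
            have hnp : ¬ 0 < g y := fun h => hyK (Finset.mem_filter.mpr ⟨hyK2, h⟩)
            have hgy : g y = 0 := le_antisymm (not_lt.mp hnp) (hg y)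
            rw [hgy]
            ring
          · rw [if_neg hyK2]
            ring
      · rw [stratCost_cons]
        have herase : ((insert p Kpos).erase p) = Kpos := Finset.erase_insert hpKpos
        rw [herase]
        have hsum : ∑ y ∈ Kpos, g' y = (∑ y ∈ Kpos, g y) - Kpos.card * g ym := by
          have h1 : ∀ y ∈ Kpos, g' y = g y - g ym := by
            intro y hy
            rw [hg'def]
            dsimp only
            rw [if_pos hy]
          rw [Finset.sum_congr rfl h1, Finset.sum_sub_distrib, Finset.sum_const,
            nsmul_eq_mul]
        have hsub : ∑ y ∈ Kpos, g y ≤ ∑ y ∈ K, g y :=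
          Finset.sum_le_sum_of_subset_of_nonneg (Finset.filter_subset _ _)
            (fun y _ _ => hg y)
        have hmono := mul_le_mul_of_nonneg_left hsub hc
        calc g ym * (c * (Kpos.card : ℝ) + b) + stratCost b c p s'
            ≤ g ym * (c * (Kpos.card : ℝ) + b)
              + (c * (∑ y ∈ Kpos, g' y) + b * (M - g ym)) := by linarith
          _ = c * ((∑ y ∈ Kpos, g' y) + (Kpos.card : ℝ) * g ym) + b * M := by ring
          _ = c * (∑ y ∈ Kpos, g y) + b * M := by rw [hsum]; ring_nf
          _ ≤ c * (∑ y ∈ K, g y) + b * M := by linarith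

/-- The rebuild deviation: dropping a set `S` of invitees and rebuilding the remaining
support as a nested family bounds the investment in `S`. -/
lemma rebuild {a b c : ℝ} (hb : 0 < b) (hc : 0 < c) {cfg : Config V}
    (hst : Stable a b c cfg) (p : V) (S : Finset V) (hpS : p ∉ S)
    (hSpos : ∀ y ∈ S, 0 < srate (cfg p) p y) (M : ℝ) (hM0 : 0 ≤ M)
    (hMub : ∀ y, y ≠ p → y ∉ S → srate (cfg p) p y ≤ M) :
    c * (∑ y ∈ S, srate (cfg p) p y) + b * (totRate (cfg p) - M) ≤ a * (S.card : ℝ) := by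
  have hv := hst.1
  set K : Finset V := (univ.erase p) \ S with hK
  have hpK : p ∉ K := by simp [hK]
  have hg : ∀ y, 0 ≤ srate (cfg p) p y :=
    fun y => srate_nonneg (cfg p) (fun e he => (hv p e he).2) p y
  obtain ⟨s, hvalid, hsr, hcost⟩ := nest_exists hb.le hc.le p
    ((K.filter (fun y => 0 < srate (cfg p) p y)).card) (fun y => srate (cfg p) p y) hg K
    le_rfl hpK M hM0
    (fun y hy => hMub y (Finset.mem_erase.mp (Finset.mem_sdiff.mp hy).1).1
      (Finset.mem_sdiff.mp hy).2)
  have hSne : ∀ y ∈ S, y ≠ p := by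
    intro y hy
    rintro rfl
    exact hpS hy
  have hSconn : ∀ y ∈ S, connected cfg y p := by
    intro y hy
    obtain ⟨e, he, hpe, hye⟩ := exists_event_of_srate_ne (cfg p) p y (ne_of_gt (hSpos y hy))
    exact attendee_connected hc hst he hye (hSne y hy)
  have hSmeet : ∀ y ∈ S, meet cfg y p = 1 := by
    intro y hy
    have h1 := (hSconn y hy).2
    have h2 := meet_le_one hc hst (hSne y hy) (hSpos y hy)
    rw [meet_comm] at h2
    linarith
  have hnb : nbrs (Function.update cfg p s) p = (nbrs cfg p) \ S := by
    ext y
    rw [mem_nbrs, Finset.mem_sdiff, mem_nbrs]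
    rcases eq_or_ne y p with rfl | hyp
    · exact iff_of_false (fun h => h.1 rfl) (fun h => h.1.1 rfl)
    · by_cases hyS : y ∈ S
      · apply iff_of_false
        · rintro ⟨-, hm⟩
          rw [meet_update] at hm
          have h1 : srate s y p = 0 := by
            rw [srate_comm, hsr y hyp, if_neg (by simp [hK, hyS])]
          have h2 : srate (cfg p) y p = srate (cfg p) p y := srate_comm (cfg p) y p
          rw [h1, h2, hSmeet y hyS] at hm
          linarith [hSpos y hyS]
        · rintro ⟨-, h2⟩
          exact h2 hyS
      · have hyK : y ∈ K := by simp [hK, hyp, hyS]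
        have hmeq : meet (Function.update cfg p s) y p = meet cfg y p := by
          rw [meet_update]
          have h1 : srate s y p = srate (cfg p) y p := by
            rw [srate_comm s y p, hsr y hyp, if_pos hyK, srate_comm (cfg p) y p]
          rw [h1]
          ring
        unfold connected
        rw [hmeq]
        constructor
        · rintro ⟨h1, h2⟩
          exact ⟨⟨h1, h2⟩, hyS⟩
        · rintro ⟨⟨h1, h2⟩, -⟩
          exact ⟨h1, h2⟩
  have hScard : S ⊆ nbrs cfg p := fun y hy => mem_nbrs.mpr (hSconn y hy)
  have hstab := hst.2 p s hvalid
  have hupd : utility a b c (Function.update cfg p s) p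
      = a * ((nbrs (Function.update cfg p s) p).card : ℝ) - stratCost b c p s := by
    rw [utility, Function.update_self]
  rw [hupd, hnb, utility] at hstab
  have hcardeq : (((nbrs cfg p) \ S).card : ℝ) = ((nbrs cfg p).card : ℝ) - (S.card : ℝ) := by
    rw [Finset.card_sdiff_of_subset hScard]
    have := Finset.card_le_card hScard
    push_cast [Nat.cast_sub this]
    ring
  rw [hcardeq] at hstab
  have hco : stratCost b c p (cfg p)
      = c * (∑ y ∈ univ.erase p, srate (cfg p) p y) + b * totRate (cfg p) :=
    stratCost_eq b c p (cfg p) (fun e he => (hv p e he).1)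
  have hSsub : S ⊆ univ.erase p :=
    fun y hy => Finset.mem_erase.mpr ⟨hSne y hy, Finset.mem_univ y⟩
  have hsplit : ∑ y ∈ univ.erase p, srate (cfg p) p y
      = (∑ y ∈ K, srate (cfg p) p y) + ∑ y ∈ S, srate (cfg p) p y := by
    rw [hK]
    exact (Finset.sum_sdiff hSsub).symm
  rw [hco, hsplit] at hstab
  linarith [hcost, hstab]

/-- In a stable configuration, an active agent's total event rate is below `a / c`. -/
lemma total_rate_lt {a b c : ℝ} (ha : 0 < a) (hb : 0 < b) (hc : 0 < c) {cfg : Config V}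
    (hst : Stable a b c cfg) (p : V) (hT : 0 < totRate (cfg p)) :
    c * totRate (cfg p) < a := by
  by_contra hcon
  push_neg at hcon
  have hv := hst.1
  set J : Finset V := univ.filter (fun y => y ≠ p ∧ srate (cfg p) p y = totRate (cfg p))
    with hJ
  have hpJ : p ∉ J := by simp [hJ]
  have hJpos : ∀ y ∈ J, 0 < srate (cfg p) p y := by
    intro y hy
    rw [(Finset.mem_filter.mp hy).2.2]
    exact hT
  have hJsum : ∑ y ∈ J, srate (cfg p) p y = (J.card : ℝ) * totRate (cfg p) := by
    rw [Finset.sum_congr rfl (fun y hy => (Finset.mem_filter.mp hy).2.2),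
      Finset.sum_const, nsmul_eq_mul]
  have hacard : a * (J.card : ℝ) ≤ c * totRate (cfg p) * (J.card : ℝ) :=
    mul_le_mul_of_nonneg_right hcon (Nat.cast_nonneg J.card)
  rcases ((univ.erase p) \ J).eq_empty_or_nonempty with hKe | hKne
  · have h := rebuild hb hc hst p J hpJ hJpos 0 le_rfl
      (fun y hyp hyJ => by
        exfalso
        have hmem : y ∈ (univ.erase p) \ J :=
          Finset.mem_sdiff.mpr ⟨Finset.mem_erase.mpr ⟨hyp, Finset.mem_univ y⟩, hyJ⟩
        rw [hKe] at hmem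
        exact absurd hmem (Finset.notMem_empty y))
    rw [hJsum] at h
    nlinarith [mul_pos hb hT]
  · obtain ⟨y0, hy0, hmax⟩ := Finset.exists_max_image _ (fun y => srate (cfg p) p y) hKne
    obtain ⟨hy0a, hy0J⟩ := Finset.mem_sdiff.mp hy0
    have hy0p : y0 ≠ p := (Finset.mem_erase.mp hy0a).1
    have hM0 : 0 ≤ srate (cfg p) p y0 :=
      srate_nonneg (cfg p) (fun e he => (hv p e he).2) p y0
    have hMlt : srate (cfg p) p y0 < totRate (cfg p) := by
      have hle := srate_le_totRate (cfg p) (fun e he => (hv p e he).2) p y0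
      rcases lt_or_eq_of_le hle with h | h
      · exact h
      · exact absurd (Finset.mem_filter.mpr ⟨Finset.mem_univ y0, hy0p, h⟩) hy0J
    have h := rebuild hb hc hst p J hpJ hJpos (srate (cfg p) p y0) hM0
      (fun y hyp hyJ => hmax y
        (Finset.mem_sdiff.mpr ⟨Finset.mem_erase.mpr ⟨hyp, Finset.mem_univ y⟩, hyJ⟩))
    rw [hJsum] at h
    nlinarith [mul_pos hb (sub_pos.mpr hMlt)]

/-- In a stable configuration, some agent receives the full total rate. -/
lemma exists_full_invitee {a b c : ℝ} (hb : 0 < b) (hc : 0 < c) {cfg : Config V}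
    (hst : Stable a b c cfg) (p : V) (hne : (univ.erase p).Nonempty) :
    ∃ y, y ≠ p ∧ srate (cfg p) p y = totRate (cfg p) := by
  have hv := hst.1
  obtain ⟨y0, hy0, hmax⟩ := Finset.exists_max_image _ (fun y => srate (cfg p) p y) hne
  have hy0p : y0 ≠ p := (Finset.mem_erase.mp hy0).1
  have hM0 : 0 ≤ srate (cfg p) p y0 :=
    srate_nonneg (cfg p) (fun e he => (hv p e he).2) p y0
  have h := rebuild hb hc hst p ∅ (Finset.notMem_empty p)
    (fun y hy => absurd hy (Finset.notMem_empty y)) (srate (cfg p) p y0) hM0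
    (fun y hyp _ => hmax y (Finset.mem_erase.mpr ⟨hyp, Finset.mem_univ y⟩))
  rw [Finset.sum_empty] at h
  have hle := srate_le_totRate (cfg p) (fun e he => (hv p e he).2) p y0
  refine ⟨y0, hy0p, le_antisymm hle ?_⟩
  simp only [Finset.card_empty, Nat.cast_zero, mul_zero] at h
  nlinarith

/-- For a local bridge, only the endpoints support the connection. -/
lemma bridge_decomp {a b c : ℝ} (hc : 0 < c) {cfg : Config V} (hst : Stable a b c cfg)
    {G : SimpleGraph V} (hsupp : Supports cfg G) {u v : V} (huv : u ≠ v)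
    (hno : ∀ w, ¬(G.Adj u w ∧ G.Adj v w)) :
    meet cfg u v = srate (cfg u) u v + srate (cfg v) u v := by
  have hzero : ∀ w, w ≠ u → w ≠ v → srate (cfg w) u v = 0 := by
    intro w hwu hwv
    by_contra hz
    obtain ⟨e, he, hue, hve⟩ := exists_event_of_srate_ne (cfg w) u v hz
    have h1 : connected cfg u w := attendee_connected hc hst he hue (Ne.symm hwu)
    have h2 : connected cfg v w := attendee_connected hc hst he hve (Ne.symm hwv)
    exact hno w ⟨(hsupp u w).mpr h1, (hsupp v w).mpr h2⟩
  rw [meet_eq]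
  have hvmem : v ∈ univ.erase u := Finset.mem_erase.mpr ⟨Ne.symm huv, Finset.mem_univ v⟩
  rw [← Finset.sum_erase_add _ _ (Finset.mem_univ u),
    ← Finset.sum_erase_add (univ.erase u) (fun w => srate (cfg w) u v) hvmem]
  have hrest : ∑ w ∈ (univ.erase u).erase v, srate (cfg w) u v = 0 :=
    Finset.sum_eq_zero (fun w hw => hzero w
      (Finset.mem_erase.mp (Finset.mem_erase.mp hw).2).1 (Finset.mem_erase.mp hw).1)
  rw [hrest]
  ring

end Aux

/-- In a network supported by a stable configuration: if `γ = a/c ≤ 1/2`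
then no vertex is incident to any local bridge (every edge has a common neighbour); and for
`γ < 1` each vertex is incident to at most one local bridge, i.e. if `u` is connected to two
distinct agents `v, x`, sharing no common neighbour with either, the configuration is not
stable. -/
theorem local_bridge_bounds {V : Type*} [Fintype V] [DecidableEq V]
    (a b c : ℝ) (ha : 0 < a) (hb : 0 < b) (hc : 0 < c)
    (cfg : Config V) (hst : Stable a b c cfg)
    (G : SimpleGraph V) [DecidableRel G.Adj] (hsupp : Supports cfg G) :
    (a / c ≤ 1 / 2 → ∀ u v : V, G.Adj u v → ∃ w, G.Adj u w ∧ G.Adj v w) ∧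
    (a / c < 1 → ∀ u v x : V, v ≠ x → G.Adj u v → G.Adj u x →
      (∀ w, ¬(G.Adj u w ∧ G.Adj v w)) → (∀ w, ¬(G.Adj u w ∧ G.Adj x w)) → False) := by
  have hv := hst.1
  have hnn : ∀ p q r : V, 0 ≤ srate (cfg p) q r :=
    fun p q r => srate_nonneg (cfg p) (fun e he => (hv p e he).2) q r
  have hlt : ∀ p q r : V, srate (cfg p) q r ≤ totRate (cfg p) :=
    fun p q r => srate_le_totRate (cfg p) (fun e he => (hv p e he).2) q r
  constructor
  · -- part 1 : γ ≤ 1/2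
    intro hγ u v hAdj
    by_contra hno0
    push_neg at hno0
    have hno : ∀ w, ¬(G.Adj u w ∧ G.Adj v w) := fun w h => hno0 w h.1 h.2
    obtain ⟨huv, hm⟩ := (hsupp u v).mp hAdj
    have hdec := bridge_decomp hc hst hsupp huv hno
    have hm' : 1 ≤ srate (cfg u) u v + srate (cfg v) u v := by rw [← hdec]; exact hm
    have ha2 : 2 * a ≤ c := by
      rw [div_le_div_iff₀ hc two_pos] at hγ
      linarith
    have hβhalf : srate (cfg v) u v < 1 / 2 := by
      rcases le_or_gt (totRate (cfg v)) 0 with hTv | hTv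
      · have h0 : srate (cfg v) u v = 0 := le_antisymm ((hlt v u v).trans hTv) (hnn v u v)
        rw [h0]
        norm_num
      · have hch := total_rate_lt ha hb hc hst v hTv
        nlinarith [mul_le_mul_of_nonneg_left (hlt v u v) hc.le]
    have hα : 1 / 2 < srate (cfg u) u v := by linarith
    have hTu : 0 < totRate (cfg u) := lt_of_lt_of_le (by linarith) (hlt u u v)
    have hch := total_rate_lt ha hb hc hst u hTu
    nlinarith [mul_le_mul_of_nonneg_left (hlt u u v) hc.le]
  · -- part 2 : γ < 1
    intro hγ u v x hvx hAdjv hAdjx hnov hnox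
    have hac : a < c := by
      rw [div_lt_one hc] at hγ
      exact hγ
    obtain ⟨huv, hmv⟩ := (hsupp u v).mp hAdjv
    obtain ⟨hux, hmx⟩ := (hsupp u x).mp hAdjx
    have hdecv := bridge_decomp hc hst hsupp huv hnov
    have hdecx := bridge_decomp hc hst hsupp hux hnox
    have hmv' : 1 ≤ srate (cfg u) u v + srate (cfg v) u v := by rw [← hdecv]; exact hmv
    have hmx' : 1 ≤ srate (cfg u) u x + srate (cfg x) u x := by rw [← hdecx]; exact hmx
    -- β < 1
    have hβ1 : srate (cfg v) u v < 1 := by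
      rcases le_or_gt (totRate (cfg v)) 0 with hTv | hTv
      · have h0 : srate (cfg v) u v = 0 := le_antisymm ((hlt v u v).trans hTv) (hnn v u v)
        rw [h0]
        norm_num
      · have hch := total_rate_lt ha hb hc hst v hTv
        nlinarith [mul_le_mul_of_nonneg_left (hlt v u v) hc.le]
    have hα0 : 0 < srate (cfg u) u v := by linarith
    have hTu0 : 0 < totRate (cfg u) := lt_of_lt_of_le hα0 (hlt u u v)
    obtain ⟨y, hyp, hyfull⟩ := exists_full_invitee hb hc hst u
      ⟨v, Finset.mem_erase.mpr ⟨Ne.symm huv, Finset.mem_univ v⟩⟩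
    have hyconn : connected cfg y u := by
      have hry : 0 < srate (cfg u) u y := by rw [hyfull]; exact hTu0
      obtain ⟨e, he, hue, hye⟩ := exists_event_of_srate_ne (cfg u) u y (ne_of_gt hry)
      exact attendee_connected hc hst he hye hyp
    have hAdjuy : G.Adj u y := (hsupp u y).mpr (connected_comm.mp hyconn)
    have hexcl := srate_inclexcl (cfg u) u (fun e he => (hv u e he).1)
      (fun e he => (hv u e he).2)
    by_cases hyv : y = v
    · -- v is the full invitee: v and x overlap fully, so x can reach v cheaply
      have hkey : srate (cfg u) u x ≤ srate (cfg u) v x := by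
        have h6 := hexcl v x
        rw [← hyv, hyfull] at *
        have h7 := hexcl v x
        nlinarith [hlt u u v]
      have hmvx : srate (cfg u) u x ≤ meet cfg v x :=
        le_trans hkey (srate_le_meet hv u v x)
      have hncvx : ¬ connected cfg v x := by
        intro hcon
        exact hnox v ⟨hAdjv, (hsupp x v).mpr (connected_comm.mp hcon)⟩
      have hfeas : 1 ≤ meet cfg x v + totRate (cfg x) := by
        rw [meet_comm cfg x v]
        have h3 := hlt x u x
        linarith
      have hadd := add_all ha hc hst hvx hncvx hfeas
      have hTx0 : 0 < totRate (cfg x) := by nlinarith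
      have := total_rate_lt ha hb hc hst x hTx0
      linarith
    · -- the full invitee y differs from v: v can reach y cheaply
      have hkey : srate (cfg u) u v ≤ srate (cfg u) v y := by
        have h6 := hexcl v y
        rw [hyfull] at h6
        linarith
      have hmvy : srate (cfg u) u v ≤ meet cfg v y :=
        le_trans hkey (srate_le_meet hv u v y)
      have hncvy : ¬ connected cfg v y := by
        intro hcon
        exact hnov y ⟨hAdjuy, (hsupp v y).mpr hcon⟩
      have hncyv : ¬ connected cfg y v := fun h => hncvy (connected_comm.mp h)
      have hfeas : 1 ≤ meet cfg v y + totRate (cfg v) := by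
        have h3 := hlt v u v
        linarith
      have hadd := add_all ha hc hst (Ne.intro hyv) hncyv hfeas
      have hTv0 : 0 < totRate (cfg v) := by nlinarith
      have := total_rate_lt ha hb hc hst v hTv0
      linarith
end

section
/- Any K-supportable connection graph G of the social-event game satisfies d̄_G ≤ γ·K·(K+1), where d̄_G is the average degree of G. -/
open Finset

/- ======== auxiliary lemmas ======== -/

lemma list_sum_map_sub {α : Type*} (l : List α) (f g : α → ℝ) :
    (l.map (fun x => f x - g x)).sum = (l.map f).sum - (l.map g).sum := by
  induction l with
  | nil => simp
  | cons h t ih => simp [ih]; ring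

lemma list_sum_finset_sum {α β : Type*} (fs : Finset β) (l : List α) (f : β → α → ℝ) :
    ∑ x ∈ fs, (l.map (f x)).sum = (l.map (fun e => ∑ x ∈ fs, f x e)).sum := by
  induction l with
  | nil => simp
  | cons h t ih => simp [Finset.sum_add_distrib, ih]

section Aux

variable {V : Type*} [Fintype V] [DecidableEq V]

lemma rateBy_nonneg {cfg : Config V} (hv : ConfigValid cfg) (w u v : V) :
    0 ≤ rateBy cfg w u v := by
  apply List.sum_nonneg
  intro x hx
  obtain ⟨e, he, rfl⟩ := List.mem_map.1 hx
  split
  · exact (hv w e he).2.le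
  · exact le_rfl

lemma meet_nonneg {cfg : Config V} (hv : ConfigValid cfg) (u v : V) :
    0 ≤ meet cfg u v :=
  Finset.sum_nonneg fun w _ => rateBy_nonneg hv w u v

/-- Key stability consequence: each invitation rate is at most `a/c`. -/
lemma invite_rate_le {a b c : ℝ} {cfg : Config V} (ha : 0 < a)
    (hst : Stable a b c cfg) (w u : V) (hu : u ≠ w) :
    c * rateBy cfg w w u ≤ a := by
  by_contra hlt
  push_neg at hlt
  obtain ⟨hvalid, hnash⟩ := hst
  set s : List (Finset V × ℝ) := (cfg w).map (fun e => (e.1.erase u, e.2)) with hs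
  have hvs : ValidStrategy w s := by
    intro e he
    rw [hs, List.mem_map] at he
    obtain ⟨e', he', rfl⟩ := he
    exact ⟨Finset.mem_erase.2 ⟨Ne.symm hu, (hvalid w e' he').1⟩, (hvalid w e' he').2⟩
  have key := hnash w s hvs
  set cfg' := Function.update cfg w s with hcfg'
  -- cost decreases by exactly c * rateBy cfg w w u
  have hcost : stratCost b c w s = stratCost b c w (cfg w) - c * rateBy cfg w w u := by
    unfold stratCost
    rw [hs, List.map_map]
    have hpt : ∀ e ∈ cfg w,
        ((fun e : Finset V × ℝ => e.2 * (c * ((e.1.erase w).card : ℝ) + b)) ∘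
          (fun e : Finset V × ℝ => (e.1.erase u, e.2))) e =
        (fun e : Finset V × ℝ => e.2 * (c * ((e.1.erase w).card : ℝ) + b)) e -
        (fun e : Finset V × ℝ => c * (if w ∈ e.1 ∧ u ∈ e.1 then e.2 else 0)) e := by
      intro e he
      have hw : w ∈ e.1 := (hvalid w e he).1
      simp only [Function.comp_apply]
      by_cases hue : u ∈ e.1
      · have hu' : u ∈ e.1.erase w := Finset.mem_erase.2 ⟨hu, hue⟩
        rw [Finset.erase_right_comm, Finset.card_erase_of_mem hu', if_pos ⟨hw, hue⟩]
        have h1 : 1 ≤ (e.1.erase w).card := Finset.card_pos.2 ⟨u, hu'⟩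
        rw [Nat.cast_sub h1]
        push_cast
        ring
      · rw [Finset.erase_eq_of_notMem hue, if_neg (by tauto)]
        ring
    rw [List.map_congr_left hpt, list_sum_map_sub, List.sum_map_mul_left]
    rfl
  -- the neighborhood shrinks by at most the single agent u
  have hnbr : nbrs cfg w ⊆ insert u (nbrs cfg' w) := by
    intro x hx
    rw [mem_nbrs] at hx
    obtain ⟨hxw, hxm⟩ := hx
    by_cases hxu : x = u
    · subst hxu; exact Finset.mem_insert_self _ _
    · refine Finset.mem_insert_of_mem ?_
      rw [mem_nbrs]
      refine ⟨hxw, ?_⟩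
      have hmeet : meet cfg' x w = meet cfg x w := by
        unfold meet
        apply Finset.sum_congr rfl
        intro z _
        by_cases hz : z = w
        · rw [hz]
          unfold rateBy
          rw [hcfg', Function.update_self, hs, List.map_map]
          congr 1
          apply List.map_congr_left
          intro e _
          simp only [Function.comp_apply, Finset.mem_erase]
          have : ((x ≠ u ∧ x ∈ e.1) ∧ w ≠ u ∧ w ∈ e.1) ↔ (x ∈ e.1 ∧ w ∈ e.1) := by
            constructor
            · rintro ⟨⟨-, h1⟩, -, h2⟩; exact ⟨h1, h2⟩
            · rintro ⟨h1, h2⟩; exact ⟨⟨hxu, h1⟩, Ne.symm hu, h2⟩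
          rw [if_congr this rfl rfl]
        · unfold rateBy
          rw [hcfg', Function.update_of_ne hz]
      rw [hmeet]; exact hxm
  have hcard : ((nbrs cfg w).card : ℝ) ≤ ((nbrs cfg' w).card : ℝ) + 1 := by
    have := (Finset.card_le_card hnbr).trans (Finset.card_insert_le _ _)
    exact_mod_cast this
  have hkey := key
  unfold utility at hkey
  rw [hcfg', Function.update_self, hcost] at hkey
  nlinarith [hkey, hcard, ha, hlt]

/-- Rewriting the sum of rates over partners as a list sum. -/
lemma pair_sum_eq (cfg : Config V) (w v : V) :
    ∑ u ∈ univ.erase v, rateBy cfg w u v =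
      ((cfg w).map (fun e => if v ∈ e.1 then e.2 * ((e.1.erase v).card : ℝ) else 0)).sum := by
  unfold rateBy
  rw [list_sum_finset_sum]
  congr 1
  apply List.map_congr_left
  intro e _
  by_cases hv : v ∈ e.1
  · rw [if_pos hv]
    simp only [hv, and_true]
    rw [Finset.sum_ite_mem]
    have : (univ.erase v) ∩ e.1 = e.1.erase v := by
      ext x; simp [Finset.mem_erase, and_comm]
    rw [this, Finset.sum_const, nsmul_eq_mul, mul_comm]
  · simp [hv]

/-- Per-agent bound from the stability + degree conditions. -/
lemma agent_bound {a b c : ℝ} {cfg : Config V} (ha : 0 < a) (hc : 0 < c)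
    (hst : Stable a b c cfg) (K : ℕ)
    (hKw : ∀ v : V, (Finset.univ.filter (fun u => u ≠ v ∧ 0 < rateBy cfg v v u)).card ≤ K)
    (w : V) :
    ∑ v : V, ∑ u ∈ univ.erase v, rateBy cfg w u v ≤ (a / c) * K * (K + 1) := by
  have hvalid := hst.1
  set Iw : Finset V := Finset.univ.filter (fun u => u ≠ w ∧ 0 < rateBy cfg w w u) with hIw
  have hIcard : Iw.card ≤ K := hKw w
  -- every attendee of an event of w other than w itself lies in Iw
  have hatt : ∀ e ∈ cfg w, ∀ x ∈ e.1, x ≠ w → x ∈ Iw := by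
    intro e he x hx hxw
    rw [hIw, Finset.mem_filter]
    refine ⟨Finset.mem_univ _, hxw, ?_⟩
    have hmem : e.2 ∈ (cfg w).map (fun e => if w ∈ e.1 ∧ x ∈ e.1 then e.2 else 0) := by
      rw [List.mem_map]
      exact ⟨e, he, if_pos ⟨(hvalid w e he).1, hx⟩⟩
    have hle : e.2 ≤ rateBy cfg w w x := by
      apply List.single_le_sum _ _ hmem
      intro y hy
      obtain ⟨e', he', rfl⟩ := List.mem_map.1 hy
      split
      · exact (hvalid w e' he').2.le
      · exact le_rfl
    exact lt_of_lt_of_le (hvalid w e he).2 hle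
  have hcardE : ∀ e ∈ cfg w, e.1.card ≤ K + 1 := by
    intro e he
    have hsub : e.1 ⊆ insert w Iw := by
      intro x hx
      by_cases hxw : x = w
      · subst hxw; exact Finset.mem_insert_self _ _
      · exact Finset.mem_insert_of_mem (hatt e he x hx hxw)
    calc e.1.card ≤ (insert w Iw).card := Finset.card_le_card hsub
      _ ≤ Iw.card + 1 := Finset.card_insert_le _ _
      _ ≤ K + 1 := by omega
  calc ∑ v : V, ∑ u ∈ univ.erase v, rateBy cfg w u v
      = ∑ v : V, ((cfg w).map
          (fun e => if v ∈ e.1 then e.2 * ((e.1.erase v).card : ℝ) else 0)).sum := by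
        exact Finset.sum_congr rfl fun v _ => pair_sum_eq cfg w v
    _ = ((cfg w).map (fun e => ∑ v : V,
          if v ∈ e.1 then e.2 * ((e.1.erase v).card : ℝ) else 0)).sum := by
        exact list_sum_finset_sum univ (cfg w) _
    _ ≤ ((cfg w).map (fun e =>
          ((K : ℝ) + 1) * (e.2 * ((e.1.erase w).card : ℝ)))).sum := by
        apply List.sum_le_sum
        intro e he
        have hw : w ∈ e.1 := (hvalid w e he).1
        have he2 : 0 < e.2 := (hvalid w e he).2
        have hsum : (∑ v : V, if v ∈ e.1 then e.2 * ((e.1.erase v).card : ℝ) else 0)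
            = ∑ v ∈ e.1, e.2 * ((e.1.erase v).card : ℝ) := by
          rw [Finset.sum_ite_mem, Finset.univ_inter]
        rw [hsum]
        have hterm : ∀ v ∈ e.1, e.2 * ((e.1.erase v).card : ℝ)
            = e.2 * ((e.1.erase w).card : ℝ) := by
          intro v hv
          rw [Finset.card_erase_of_mem hv, Finset.card_erase_of_mem hw]
        rw [Finset.sum_congr rfl hterm, Finset.sum_const, nsmul_eq_mul]
        have h1 : (e.1.card : ℝ) ≤ (K : ℝ) + 1 := by exact_mod_cast hcardE e he
        have h2 : 0 ≤ e.2 * ((e.1.erase w).card : ℝ) := by positivity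
        exact mul_le_mul_of_nonneg_right h1 h2
    _ = ((K : ℝ) + 1) * ((cfg w).map (fun e => e.2 * ((e.1.erase w).card : ℝ))).sum := by
        rw [List.sum_map_mul_left]
    _ ≤ ((K : ℝ) + 1) * ((K : ℝ) * (a / c)) := by
        apply mul_le_mul_of_nonneg_left _ (by positivity)
        have heq : ((cfg w).map (fun e => e.2 * ((e.1.erase w).card : ℝ))).sum
            = ∑ u ∈ univ.erase w, rateBy cfg w u w := by
          rw [pair_sum_eq cfg w w]
          congr 1
          apply List.map_congr_left
          intro e he
          rw [if_pos (hvalid w e he).1]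
        have hflip : ∀ u, rateBy cfg w u w = rateBy cfg w w u := by
          intro u
          unfold rateBy
          congr 1
          apply List.map_congr_left
          intro e _
          rw [if_congr (and_comm) rfl rfl]
        rw [heq, Finset.sum_congr rfl fun u _ => hflip u]
        have hsub : Iw ⊆ univ.erase w := by
          intro x hx
          rw [hIw, Finset.mem_filter] at hx
          exact Finset.mem_erase.2 ⟨hx.2.1, Finset.mem_univ _⟩
        have hvanish : ∀ x ∈ univ.erase w, x ∉ Iw → rateBy cfg w w x = 0 := by
          intro x hx hnx
          rw [hIw, Finset.mem_filter] at hnx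
          push_neg at hnx
          have hxw : x ≠ w := (Finset.mem_erase.1 hx).1
          have := hnx (Finset.mem_univ _) hxw
          exact le_antisymm (by linarith [this]) (rateBy_nonneg hvalid w w x)
        rw [← Finset.sum_subset hsub hvanish]
        calc ∑ u ∈ Iw, rateBy cfg w w u ≤ ∑ _u ∈ Iw, (a / c) := by
              apply Finset.sum_le_sum
              intro u hu
              rw [hIw, Finset.mem_filter] at hu
              have := invite_rate_le ha ⟨hvalid, hst.2⟩ w u hu.2.1
              rw [le_div_iff₀ hc]; linarith [this]
          _ = Iw.card * (a / c) := by rw [Finset.sum_const, nsmul_eq_mul]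
          _ ≤ (K : ℝ) * (a / c) := by
              apply mul_le_mul_of_nonneg_right _ (by positivity)
              exact_mod_cast hIcard
    _ = (a / c) * K * (K + 1) := by ring

end Aux

/-- Any `K`-supportable connection graph (supported by a stable
configuration in which every agent invites at most `K` distinct individuals) has average
degree at most `γ·K·(K+1)`, where `γ = a/c`. -/
theorem K_supportable_average_degree {V : Type*} [Fintype V] [DecidableEq V]
    (a b c : ℝ) (ha : 0 < a) (hb : 0 < b) (hc : 0 < c)
    (cfg : Config V) (hst : Stable a b c cfg)
    (G : SimpleGraph V) [DecidableRel G.Adj] (hsupp : Supports cfg G)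
    (K : ℕ)
    (hK : ∀ v : V, (Finset.univ.filter (fun u => u ≠ v ∧ 0 < rateBy cfg v v u)).card ≤ K) :
    (∑ v : V, (G.degree v : ℝ)) / (Fintype.card V : ℝ) ≤ (a / c) * K * (K + 1) := by
  have hvalid := hst.1
  by_cases hn : Fintype.card V = 0
  · have : IsEmpty V := Fintype.card_eq_zero_iff.mp hn
    rw [hn]
    simp
    positivity
  · have hnpos : (0 : ℝ) < (Fintype.card V : ℝ) := by
      exact_mod_cast Nat.pos_of_ne_zero hn
    rw [div_le_iff₀ hnpos]
    have hdeg : ∀ v : V, (G.degree v : ℝ) = ((nbrs cfg v).card : ℝ) := by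
      intro v
      congr 1
      rw [← SimpleGraph.card_neighborFinset_eq_degree]
      congr 1
      ext u
      rw [SimpleGraph.mem_neighborFinset, mem_nbrs]
      constructor
      · intro h
        exact (hsupp u v).1 (G.adj_symm h)
      · intro h
        exact G.adj_symm ((hsupp u v).2 h)
    have hstep1 : ∀ v : V, ((nbrs cfg v).card : ℝ) ≤ ∑ u ∈ univ.erase v, meet cfg u v := by
      intro v
      have hsub : nbrs cfg v ⊆ univ.erase v := by
        intro x hx
        rw [mem_nbrs] at hx
        exact Finset.mem_erase.2 ⟨hx.1, Finset.mem_univ _⟩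
      calc ((nbrs cfg v).card : ℝ) = ∑ _u ∈ nbrs cfg v, (1 : ℝ) := by
            rw [Finset.sum_const, nsmul_eq_mul, mul_one]
        _ ≤ ∑ u ∈ nbrs cfg v, meet cfg u v := by
            apply Finset.sum_le_sum
            intro u hu
            rw [mem_nbrs] at hu
            exact hu.2
        _ ≤ ∑ u ∈ univ.erase v, meet cfg u v := by
            apply Finset.sum_le_sum_of_subset_of_nonneg hsub
            intro u _ _
            exact meet_nonneg hvalid u v
    have hswap : ∑ v : V, ∑ u ∈ univ.erase v, meet cfg u v
        = ∑ w : V, ∑ v : V, ∑ u ∈ univ.erase v, rateBy cfg w u v := by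
      unfold meet
      rw [Finset.sum_comm]
      apply Finset.sum_congr rfl
      intro v _
      exact Finset.sum_comm
    calc ∑ v : V, (G.degree v : ℝ) = ∑ v : V, ((nbrs cfg v).card : ℝ) := by
          exact Finset.sum_congr rfl fun v _ => hdeg v
      _ ≤ ∑ v : V, ∑ u ∈ univ.erase v, meet cfg u v :=
          Finset.sum_le_sum fun v _ => hstep1 v
      _ = ∑ w : V, ∑ v : V, ∑ u ∈ univ.erase v, rateBy cfg w u v := hswap
      _ ≤ ∑ _w : V, (a / c) * K * (K + 1) :=
          Finset.sum_le_sum fun w _ => agent_bound ha hc hst K hK w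
      _ = (a / c) * K * (K + 1) * (Fintype.card V : ℝ) := by
          rw [Finset.sum_const, nsmul_eq_mul, Finset.card_univ, mul_comm]
end

section
/- In any stable event configuration, if x ∈ argmax_{u≠v} M^v_{v,u} and M^v_{v,x} > 0, then x belongs to every event held by v; equivalently, every cost-minimizing strategy realizing given invitation rates includes the maximally-invited agent in all its events. -/
open Finset

section Aux

variable {V : Type*} [Fintype V] [DecidableEq V]

/-- Build a nested ("laminar chain") strategy realizing prescribed per-agent invitation
rates with total rate bounded by any upper bound `B` of those rates. -/
lemma build_aux (v : V) :
    ∀ (n : ℕ) (T : Finset V), T.card ≤ n → v ∉ T → ∀ (f : V → ℝ) (B : ℝ), 0 ≤ B →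
    (∀ u ∈ T, 0 < f u) → (∀ u ∈ T, f u ≤ B) →
    ∃ s : List (Finset V × ℝ), ValidStrategy v s ∧
      (∀ u : V, u ≠ v →
        ((s.map (fun e => if u ∈ e.1 then e.2 else 0)).sum = if u ∈ T then f u else 0)) ∧
      (s.map Prod.snd).sum ≤ B := by
  intro n
  induction n with
  | zero =>
    intro T hT _ f B hB _ _
    have hTe : T = ∅ := Finset.card_eq_zero.mp (Nat.le_zero.mp hT)
    subst hTe
    refine ⟨[], ?_, ?_, ?_⟩
    · intro e he; cases he
    · intro u _; simp
    · simpa using hB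
  | succ n ih =>
    intro T hT hvT f B hB hposf hle
    rcases T.eq_empty_or_nonempty with rfl | hne
    · refine ⟨[], ?_, ?_, ?_⟩
      · intro e he; cases he
      · intro u _; simp
      · simpa using hB
    · classical
      obtain ⟨u₀, hu₀T, hu₀min⟩ := T.exists_min_image f hne
      have htpos : 0 < f u₀ := hposf u₀ hu₀T
      have htB : f u₀ ≤ B := hle u₀ hu₀T
      set t := f u₀ with ht
      set T' := T.filter (fun u => t < f u) with hT'
      have hT'sub : T' ⊆ T := Finset.filter_subset _ _
      have hu₀T' : u₀ ∉ T' := by simp [hT', ht]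
      have hcard : T'.card ≤ n := by
        have hlt : T'.card < T.card :=
          Finset.card_lt_card ⟨hT'sub, fun h => hu₀T' (h hu₀T)⟩
        omega
      obtain ⟨s', hval', hsum', htot'⟩ :=
        ih T' hcard (fun h => hvT (hT'sub h)) (fun u => f u - t) (B - t)
          (by linarith)
          (fun u hu => by
            have := (Finset.mem_filter.mp hu).2; linarith)
          (fun u hu => by
            have := hle u (hT'sub hu); linarith)
      refine ⟨(insert v T, t) :: s', ?_, ?_, ?_⟩
      · intro e he
        rcases List.mem_cons.mp he with rfl | he'
        · exact ⟨Finset.mem_insert_self _ _, htpos⟩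
        · exact hval' e he'
      · intro u huv
        simp only [List.map_cons, List.sum_cons, hsum' u huv]
        by_cases huT : u ∈ T
        · have hmem : u ∈ insert v T := Finset.mem_insert_of_mem huT
          rw [if_pos hmem, if_pos huT]
          by_cases huT' : u ∈ T'
          · rw [if_pos huT']; ring
          · have h1 : t ≤ f u := hu₀min u huT
            have h2 : ¬ t < f u := by
              intro h; exact huT' (Finset.mem_filter.mpr ⟨huT, h⟩)
            have : f u = t := le_antisymm (not_lt.mp h2) h1
            rw [if_neg huT', this]; ring
        · have hmem : u ∉ insert v T := by
            intro h
            rcases Finset.mem_insert.mp h with h | h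
            · exact huv h
            · exact huT h
          have huT' : u ∉ T' := fun h => huT (hT'sub h)
          rw [if_neg hmem, if_neg huT, if_neg huT']; ring
      · simp only [List.map_cons, List.sum_cons]
        linarith

lemma sumIf_le_sumSnd (v x : V) (l : List (Finset V × ℝ)) (h : ∀ e ∈ l, 0 < e.2) :
    (l.map (fun e => if v ∈ e.1 ∧ x ∈ e.1 then e.2 else 0)).sum ≤ (l.map Prod.snd).sum :=
  List.sum_le_sum (fun e he => by
    by_cases hc : v ∈ e.1 ∧ x ∈ e.1
    · simp [hc]
    · simp only [if_neg hc]; exact (h e he).le)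

lemma card_cost_eq (v : V) (s : List (Finset V × ℝ)) :
    (s.map (fun e => e.2 * ((e.1.erase v).card : ℝ))).sum
      = ∑ u ∈ univ.erase v, (s.map (fun e => if u ∈ e.1 then e.2 else 0)).sum := by
  classical
  induction s with
  | nil => simp
  | cons e s ihs =>
    simp only [List.map_cons, List.sum_cons, ihs, Finset.sum_add_distrib]
    congr 1
    have hset : (univ.erase v).filter (fun u => u ∈ e.1) = e.1.erase v := by
      ext u
      simp only [Finset.mem_filter, Finset.mem_erase, Finset.mem_univ, true_and, and_true]
    rw [← Finset.sum_filter, hset, Finset.sum_const, nsmul_eq_mul, mul_comm]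

lemma stratCost_split (b c : ℝ) (v : V) (s : List (Finset V × ℝ)) :
    stratCost b c v s
      = c * (s.map (fun e => e.2 * ((e.1.erase v).card : ℝ))).sum
        + b * (s.map Prod.snd).sum := by
  induction s with
  | nil => simp [stratCost]
  | cons e s ihs =>
    simp only [stratCost, List.map_cons, List.sum_cons] at *
    rw [ihs]; ring

end Aux

/-- In any stable configuration, if `x` maximizes the invitation rate of
`v` (over all agents `≠ v`) and is invited at positive rate, then `x` belongs to every
event held by `v`. -/
theorem argmax_in_all_events {V : Type*} [Fintype V] [DecidableEq V]
    (a b c : ℝ) (ha : 0 < a) (hb : 0 < b) (hc : 0 < c)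
    (cfg : Config V) (hst : Stable a b c cfg)
    (v x : V) (hx : x ≠ v)
    (hmax : ∀ u : V, u ≠ v → rateBy cfg v v u ≤ rateBy cfg v v x)
    (hpos : 0 < rateBy cfg v v x) :
    ∀ e ∈ cfg v, x ∈ e.1 := by
  classical
  by_contra hcon
  push_neg at hcon
  obtain ⟨e0, he0mem, he0x⟩ := hcon
  obtain ⟨hval, hnash⟩ := hst
  set f : V → ℝ := fun u => rateBy cfg v v u with hf
  set M : ℝ := rateBy cfg v v x with hM
  -- per-agent invitation rate of `v`, simplified using validity
  have hS : ∀ u : V, ((cfg v).map (fun e => if u ∈ e.1 then e.2 else 0)).sum = f u := by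
    intro u
    simp only [hf, rateBy]
    congr 1
    apply List.map_congr_left
    intro e he
    have hv : v ∈ e.1 := (hval v e he).1
    by_cases hu : u ∈ e.1 <;> simp [hu, hv]
  have hf_nonneg : ∀ u, 0 ≤ f u := by
    intro u
    rw [← hS u]
    apply List.sum_nonneg
    intro y hy
    obtain ⟨e, he, rfl⟩ := List.mem_map.mp hy
    by_cases hu : u ∈ e.1
    · simp only [if_pos hu]; exact (hval v e he).2.le
    · simp [hu]
  set T : Finset V := univ.filter (fun u => u ≠ v ∧ 0 < f u) with hT
  have hvT : v ∉ T := by simp [hT]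
  obtain ⟨s', hval', hsum', htot'⟩ :=
    build_aux v T.card T le_rfl hvT f M hpos.le
      (fun u hu => (Finset.mem_filter.mp hu).2.2)
      (fun u hu => hmax u (Finset.mem_filter.mp hu).2.1)
  -- the new strategy realizes exactly the old per-agent rates
  have hS' : ∀ u : V, u ≠ v →
      ((s'.map (fun e => if u ∈ e.1 then e.2 else 0)).sum = f u) := by
    intro u huv
    rw [hsum' u huv]
    by_cases huT : u ∈ T
    · rw [if_pos huT]
    · rw [if_neg huT]
      have : ¬ (u ≠ v ∧ 0 < f u) := by
        intro h; exact huT (Finset.mem_filter.mpr ⟨Finset.mem_univ u, h⟩)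
      have hnpos : ¬ 0 < f u := fun h => this ⟨huv, h⟩
      exact (le_antisymm (not_lt.mp hnpos) (hf_nonneg u)).symm
  set cfg' : Config V := Function.update cfg v s' with hcfg'
  have hcfg'v : cfg' v = s' := Function.update_self v s' cfg
  -- meeting rates with `v` are unchanged
  have hmeet : ∀ u : V, u ≠ v → meet cfg' u v = meet cfg u v := by
    intro u huv
    unfold meet
    apply Finset.sum_congr rfl
    intro w _
    by_cases hw : w = v
    · rw [hw]
      have h1 : rateBy cfg' v u v = (s'.map (fun e => if u ∈ e.1 then e.2 else 0)).sum := by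
        simp only [rateBy, hcfg'v]
        congr 1
        apply List.map_congr_left
        intro e he
        have hv : v ∈ e.1 := (hval' e he).1
        by_cases hu : u ∈ e.1 <;> simp [hu, hv]
      have h2 : rateBy cfg v u v = ((cfg v).map (fun e => if u ∈ e.1 then e.2 else 0)).sum := by
        simp only [rateBy]
        congr 1
        apply List.map_congr_left
        intro e he
        have hv : v ∈ e.1 := (hval v e he).1
        by_cases hu : u ∈ e.1 <;> simp [hu, hv]
      rw [h1, h2, hS' u huv, hS u]
    · simp only [rateBy, hcfg', Function.update_of_ne hw]
  -- hence neighbourhoods of `v` are unchanged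
  have hnbrs : nbrs cfg' v = nbrs cfg v := by
    unfold nbrs
    ext u
    rw [Finset.mem_filter, Finset.mem_filter]
    simp only [Finset.mem_univ, true_and, connected]
    constructor
    · rintro ⟨h1, h2⟩; exact ⟨h1, by rwa [hmeet u h1] at h2⟩
    · rintro ⟨h1, h2⟩; exact ⟨h1, by rwa [hmeet u h1]⟩
  -- the "size" part of the cost is unchanged
  have hA : (s'.map (fun e => e.2 * ((e.1.erase v).card : ℝ))).sum
      = ((cfg v).map (fun e => e.2 * ((e.1.erase v).card : ℝ))).sum := by
    rw [card_cost_eq, card_cost_eq]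
    apply Finset.sum_congr rfl
    intro u hu
    have huv : u ≠ v := (Finset.mem_erase.mp hu).1
    rw [hS' u huv, hS u]
  -- total rate strictly decreases
  have hMltR : M < ((cfg v).map Prod.snd).sum := by
    obtain ⟨l1, l2, hdec⟩ := List.append_of_mem he0mem
    have hvalcfg : ∀ e ∈ cfg v, 0 < e.2 := fun e he => (hval v e he).2
    rw [hdec] at hvalcfg
    have h1 : (l1.map (fun e => if v ∈ e.1 ∧ x ∈ e.1 then e.2 else 0)).sum
        ≤ (l1.map Prod.snd).sum :=
      sumIf_le_sumSnd v x l1 (fun e he => hvalcfg e (by simp [he]))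
    have h2 : (l2.map (fun e => if v ∈ e.1 ∧ x ∈ e.1 then e.2 else 0)).sum
        ≤ (l2.map Prod.snd).sum :=
      sumIf_le_sumSnd v x l2 (fun e he => hvalcfg e (by simp [he]))
    have he0pos : 0 < e0.2 := hvalcfg e0 (by simp)
    have he0term : (if v ∈ e0.1 ∧ x ∈ e0.1 then e0.2 else 0) = 0 := by
      rw [if_neg]; intro h; exact he0x h.2
    rw [hM, rateBy, hdec]
    simp only [List.map_append, List.sum_append, List.map_cons, List.sum_cons, he0term]
    linarith
  have hRle : (s'.map Prod.snd).sum ≤ M := htot'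
  -- compare utilities
  have hkey := hnash v s' hval'
  rw [utility, utility, hnbrs, ← hcfg', hcfg'v] at hkey
  rw [stratCost_split, stratCost_split] at hkey
  nlinarith [hkey, hA, hMltR, hRle, hb]
end
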